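/- arXiv:0909.1216 — 2 statements merged into one kernel-verified Lean document; each statement's English description precedes it below -/
import Mathlib

section
/- Suppose a sequence u : ℕ → ℂ satisfies u_n = κ·λ^n + Σᵢ Pᵢ(n)μᵢⁿ where κ ≠ 0, λ ≠ 0, the Pᵢ are polynomials, and |μᵢ| < |λ| for all i. Then u_n ≠ 0 for all sufficiently large n and lim_{n→∞} u_{n+1}/u_n = λ. -/
open Filter Polynomial

lemma aux_poly_geom (Q : ℂ[X]) {q : ℂ} (hq : ‖q‖ < 1) :
    Tendsto (fun n : ℕ => Q.eval (n : ℂ) * q ^ n) atTop (nhds 0) := by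
  have h : ∀ n : ℕ, Q.eval (n : ℂ) * q ^ n =
      ∑ j ∈ Finset.range (Q.natDegree + 1), Q.coeff j * ((n : ℂ) ^ j * q ^ n) := by
    intro n
    rw [Polynomial.eval_eq_sum_range, Finset.sum_mul]
    simp [mul_assoc]
  simp only [h]
  have : (0 : ℂ) = ∑ j ∈ Finset.range (Q.natDegree + 1), Q.coeff j * 0 := by simp
  rw [this]
  apply tendsto_finset_sum
  intro j _
  apply Tendsto.const_mul
  exact ((summable_norm_pow_mul_geometric_of_norm_lt_one j hq).of_norm).tendsto_atTop_zero

/-- If `u n = κ λ^n + Σᵢ Pᵢ(n) μᵢⁿ` with `κ ≠ 0`, `λ ≠ 0` and `|μᵢ| < |λ|` for all `i`,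
then `u n ≠ 0` for all large `n` and `u (n+1) / u n → λ`. -/
theorem stmt2 (r : ℕ) (κ lam : ℂ) (hκ : κ ≠ 0) (hlam : lam ≠ 0)
    (μ : Fin r → ℂ) (P : Fin r → ℂ[X])
    (hμ : ∀ i, ‖μ i‖ < ‖lam‖)
    (u : ℕ → ℂ)
    (hu : ∀ n : ℕ, u n = κ * lam ^ n + ∑ i : Fin r, (P i).eval (n : ℂ) * μ i ^ n) :
    (∀ᶠ n : ℕ in atTop, u n ≠ 0) ∧
      Tendsto (fun n : ℕ => u (n + 1) / u n) atTop (nhds lam) := by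
  set w : ℕ → ℂ := fun n => 1 + (∑ i : Fin r, (P i).eval (n : ℂ) * (μ i / lam) ^ n) / κ with hw
  have huw : ∀ n : ℕ, u n = κ * lam ^ n * w n := by
    intro n
    rw [hu n, hw]
    have : ∀ i : Fin r, (P i).eval (n : ℂ) * μ i ^ n
        = lam ^ n * ((P i).eval (n : ℂ) * (μ i / lam) ^ n) := by
      intro i
      rw [div_pow]
      field_simp
    rw [Finset.sum_congr rfl (fun i _ => this i), ← Finset.mul_sum]
    field_simp
  have hwt : Tendsto w atTop (nhds 1) := by
    have hsum : Tendsto (fun n : ℕ => ∑ i : Fin r, (P i).eval (n : ℂ) * (μ i / lam) ^ n)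
        atTop (nhds 0) := by
      have : (0 : ℂ) = ∑ i : Fin r, 0 := by simp
      rw [this]
      apply tendsto_finset_sum
      intro i _
      apply aux_poly_geom
      rw [norm_div]
      rw [div_lt_one (by simpa using (norm_pos_iff.mpr hlam))]
      exact hμ i
    have := ((hsum.div_const κ).const_add (1 : ℂ))
    simpa using this
  have hwne : ∀ᶠ n : ℕ in atTop, w n ≠ 0 := by
    have : ∀ᶠ n : ℕ in atTop, w n ∈ {z : ℂ | z ≠ 0} :=
      hwt (IsOpen.mem_nhds isOpen_ne one_ne_zero)
    exact this
  constructor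
  · filter_upwards [hwne] with n hn
    rw [huw n]
    exact mul_ne_zero (mul_ne_zero hκ (pow_ne_zero n hlam)) hn
  · have key : ∀ᶠ n : ℕ in atTop, u (n + 1) / u n = lam * (w (n + 1) / w n) := by
      filter_upwards [hwne] with n hn
      rw [huw n, huw (n + 1)]
      rw [pow_succ]
      field_simp
    have hlim : Tendsto (fun n : ℕ => lam * (w (n + 1) / w n)) atTop (nhds lam) := by
      have h1 : Tendsto (fun n : ℕ => w (n + 1)) atTop (nhds 1) :=
        hwt.comp (tendsto_add_atTop_nat 1)
      have := (h1.div hwt one_ne_zero).const_mul lam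
      simpa using this
    exact Tendsto.congr' (key.mono fun n h => h.symm) hlim
end

section
/- Let {T_n}_{n∈ℕ} be invertible k×k complex matrices converging to T ∈ M_k(ℂ), where T has a simple eigenvalue 1 of strictly maximal modulus with right eigenvector u and left eigenvector v, uᵗv = 1. Then for every ε > 0 there exist m, N ∈ ℕ such that ‖T_{n+m}T_{n+m−1}⋯T_{n+1} − u·vᵗ‖ < ε for all n ≥ N. -/
open Filter Matrix Polynomial

attribute [local instance] Matrix.linftyOpNormedAddCommGroup Matrix.linftyOpNormedRing
  Matrix.linftyOpNormedAlgebra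

lemma aux_eval_charpoly {k : ℕ} (M : Matrix (Fin k) (Fin k) ℂ) (μ : ℂ) :
    (Matrix.charpoly M).eval μ = (Matrix.diagonal (fun _ => μ) - M).det := by
  rw [Matrix.charpoly, ← Polynomial.coe_evalRingHom, RingHom.map_det]
  congr 1
  ext i j
  by_cases h : i = j <;>
    simp [h, charmatrix_apply, Matrix.map_apply, Matrix.diagonal_apply]

lemma aux_spec_root {k : ℕ} (M : Matrix (Fin k) (Fin k) ℂ) {μ : ℂ}
    (h : μ ∈ spectrum ℂ M) : (Matrix.charpoly M).IsRoot μ := by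
  rw [spectrum.mem_iff] at h
  rw [Polynomial.IsRoot, aux_eval_charpoly]
  by_contra hd
  exact h ((Matrix.isUnit_iff_isUnit_det _).mpr (isUnit_iff_ne_zero.mpr hd)
    |>.map (RingHom.id _) |> fun hh => by
      simpa [Matrix.algebraMap_eq_diagonal, Pi.algebraMap_def] using hh)

lemma aux_pow_tendsto {k : ℕ} (Tlim : Matrix (Fin k) (Fin k) ℂ)
    (hroot : (Matrix.charpoly Tlim).rootMultiplicity 1 = 1)
    (hmax : ∀ μ ∈ (Matrix.charpoly Tlim).roots, μ ≠ 1 → ‖μ‖ < 1)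
    (u v : Fin k → ℂ)
    (hu : Tlim.mulVec u = u) (hv : Tlimᵀ.mulVec v = v) (huv : u ⬝ᵥ v = 1) :
    Tendsto (fun m : ℕ => Tlim ^ m) atTop (nhds (vecMulVec u v)) := by
  have hk : k ≠ 0 := by
    rintro rfl
    simp [dotProduct] at huv
  have : NeZero k := ⟨hk⟩
  have hnt : Nontrivial (Matrix (Fin k) (Fin k) ℂ) := by
    refine ⟨1, 0, fun h => ?_⟩
    have := congrFun (congrFun h 0) 0
    simp at this
  set Q : Matrix (Fin k) (Fin k) ℂ := vecMulVec u v with hQ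
  have hvu : v ⬝ᵥ u = 1 := by rwa [dotProduct_comm]
  have hTQ : Tlim * Q = Q := by
    ext i j
    simp only [mul_apply, hQ, vecMulVec_apply]
    calc ∑ l, Tlim i l * (u l * v j) = (∑ l, Tlim i l * u l) * v j := by
          rw [Finset.sum_mul]; simp [mul_assoc]
      _ = u i * v j := by
          have := congrFun hu i
          simp only [mulVec, dotProduct] at this
          rw [this]
  have hQT : Q * Tlim = Q := by
    ext i j
    simp only [mul_apply, hQ, vecMulVec_apply]
    calc ∑ l, u i * v l * Tlim l j = u i * ∑ l, v l * Tlim l j := by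
          rw [Finset.mul_sum]; simp [mul_assoc]
      _ = u i * v j := by
          have := congrFun hv j
          simp only [mulVec, dotProduct, transpose_apply] at this
          rw [show ∑ l, v l * Tlim l j = ∑ l, Tlim l j * v l by
            exact Finset.sum_congr rfl fun l _ => mul_comm _ _, this]
  have hQQ : Q * Q = Q := by
    ext i j
    simp only [mul_apply, hQ, vecMulVec_apply]
    calc ∑ l, u i * v l * (u l * v j) = (u i * v j) * ∑ l, v l * u l := by
          rw [Finset.mul_sum]; exact Finset.sum_congr rfl fun l _ => by ring
      _ = u i * v j := by
          simp only [dotProduct] at hvu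
          rw [hvu, mul_one]
  have hSQ : (Tlim - Q) * Q = 0 := by rw [sub_mul, hTQ, hQQ, sub_self]
  set S : Matrix (Fin k) (Fin k) ℂ := Tlim - Q with hS
  -- Q * Tlim ^ m = Q
  have hQpow : ∀ m : ℕ, Q * Tlim ^ m = Q := by
    intro m
    induction m with
    | zero => simp
    | succ m ih => rw [pow_succ, ← mul_assoc, ih, hQT]
  have hpowQ : ∀ m : ℕ, Tlim ^ (m + 1) * Q = Q := by
    intro m
    induction m with
    | zero => simpa using hTQ
    | succ m ih => rw [pow_succ, mul_assoc, hTQ, ih]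
  have hpow : ∀ m : ℕ, S ^ (m + 1) = Tlim ^ (m + 1) - Q := by
    intro m
    induction m with
    | zero => simp [hS]
    | succ m ih =>
        rw [pow_succ, ih, hS, sub_mul, mul_sub, mul_sub, hpowQ, hQT, hQQ, ← pow_succ]
        abel
  -- characteristic polynomial identity
  have hchar : charmatrix S * charmatrix Q
      = Matrix.scalar (Fin k) (X : ℂ[X]) * charmatrix Tlim := by
    set f := (C : ℂ →+* ℂ[X]).mapMatrix (m := Fin k) with hf
    set D := Matrix.scalar (Fin k) (X : ℂ[X]) with hD
    have hcm : ∀ M : Matrix (Fin k) (Fin k) ℂ, charmatrix M = D - f M := fun M => rfl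
    have hc : f S * D = D * f S :=
      (Matrix.scalar_commute _ (fun r => (Commute.all _ r)) _).symm
    have h0 : f S * f Q = 0 := by rw [← _root_.map_mul, hSQ, _root_.map_zero]
    have hsum : f Tlim = f S + f Q := by rw [← _root_.map_add, hS]; norm_num
    rw [hcm, hcm, hcm, sub_mul, mul_sub, mul_sub, h0, hc, mul_sub, hsum, mul_add]
    abel
  have hdet : Matrix.charpoly S * Matrix.charpoly Q
      = (X : ℂ[X]) ^ k * Matrix.charpoly Tlim := by
    have := congrArg Matrix.det hchar
    rwa [Matrix.det_mul, Matrix.det_mul,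
      show (Matrix.scalar (Fin k) (X : ℂ[X])).det = (X : ℂ[X]) ^ k by
        simp [Matrix.scalar, Matrix.det_diagonal, Finset.prod_const]] at this
  have hS0 : Matrix.charpoly S ≠ 0 := (Matrix.charpoly_monic S).ne_zero
  have hQ0 : Matrix.charpoly Q ≠ 0 := (Matrix.charpoly_monic Q).ne_zero
  have hT0 : Matrix.charpoly Tlim ≠ 0 := (Matrix.charpoly_monic Tlim).ne_zero
  have hu0 : u ≠ 0 := by
    rintro rfl
    simp [dotProduct] at huv
  have hQroot : (Matrix.charpoly Q).IsRoot 1 := by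
    rw [Polynomial.IsRoot, aux_eval_charpoly]
    rw [← Matrix.exists_mulVec_eq_zero_iff]
    refine ⟨u, hu0, ?_⟩
    have : Q.mulVec u = u := by
      ext i
      simp only [hQ, mulVec, dotProduct, vecMulVec_apply]
      calc ∑ l, u i * v l * u l = u i * ∑ l, v l * u l := by
            rw [Finset.mul_sum]; exact Finset.sum_congr rfl fun l _ => by ring
        _ = u i := by simp only [dotProduct] at hvu; rw [hvu, mul_one]
    rw [Matrix.sub_mulVec, this, Matrix.diagonal_one, Matrix.one_mulVec, sub_self]
  have hXk0 : ((X : ℂ[X]) ^ k) ≠ 0 := pow_ne_zero _ X_ne_zero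
  have hmult : ∀ μ : ℂ, rootMultiplicity μ (Matrix.charpoly S)
      + rootMultiplicity μ (Matrix.charpoly Q)
      = rootMultiplicity μ ((X : ℂ[X]) ^ k) + rootMultiplicity μ (Matrix.charpoly Tlim) := by
    intro μ
    rw [← Polynomial.rootMultiplicity_mul (mul_ne_zero hS0 hQ0),
      ← Polynomial.rootMultiplicity_mul (mul_ne_zero hXk0 hT0), hdet]
  have hS1 : ¬ (Matrix.charpoly S).IsRoot 1 := by
    intro h
    have h1 := (Polynomial.rootMultiplicity_pos hS0).mpr h
    have h2 := (Polynomial.rootMultiplicity_pos hQ0).mpr hQroot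
    have h3 := hmult 1
    have hX1 : rootMultiplicity (1 : ℂ) ((X : ℂ[X]) ^ k) = 0 :=
      Polynomial.rootMultiplicity_eq_zero (by simp [Polynomial.IsRoot])
    rw [hroot, hX1] at h3
    omega
  have hSroots : ∀ μ : ℂ, (Matrix.charpoly S).IsRoot μ → ‖μ‖ < 1 := by
    intro μ hμ
    by_cases h0 : μ = 0
    · simp [h0]
    have hne1 : μ ≠ 1 := fun h => hS1 (h ▸ hμ)
    have hmS := (Polynomial.rootMultiplicity_pos hS0).mpr hμ
    have hXk : rootMultiplicity μ ((X : ℂ[X]) ^ k) = 0 :=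
      Polynomial.rootMultiplicity_eq_zero (by simp [Polynomial.IsRoot, h0])
    have h3 := hmult μ
    rw [hXk, zero_add] at h3
    have hT : (Matrix.charpoly Tlim).IsRoot μ := by
      by_contra h
      rw [Polynomial.rootMultiplicity_eq_zero h] at h3
      omega
    have := hmax μ (Polynomial.mem_roots'.mpr ⟨hT0, hT⟩) hne1
    exact this
  have hrho : spectralRadius ℂ S < 1 := by
    have h := spectrum.spectralRadius_lt_of_forall_lt_of_nonempty (spectrum.nonempty S)
      (r := 1) (fun μ hμ => by
        have := hSroots μ (aux_spec_root S hμ)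
        exact_mod_cast this)
    simpa using h
  obtain ⟨c, hc1, hc2⟩ := exists_between hrho
  have hct : c ≠ ⊤ := (hc2.trans_le le_top).ne
  have hev := (spectrum.pow_nnnorm_pow_one_div_tendsto_nhds_spectralRadius S).eventually_lt_const hc1
  set r : ℝ := c.toReal with hrdef
  have hr0 : 0 ≤ r := ENNReal.toReal_nonneg
  have hr1 : r < 1 := by
    rw [hrdef, ← ENNReal.toReal_one]
    exact (ENNReal.toReal_lt_toReal hct ENNReal.one_ne_top).mpr hc2
  have key : ∀ᶠ m : ℕ in atTop, ‖S ^ m‖ ≤ r ^ m := by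
    filter_upwards [hev, eventually_ge_atTop 1] with m h hm
    have hmne : (m : ℝ) ≠ 0 := Nat.cast_ne_zero.mpr (by omega)
    have h1 : ((‖S ^ m‖₊ : ENNReal)) ^ ((1 / m : ℝ) * m) ≤ c ^ (m : ℝ) := by
      rw [ENNReal.rpow_mul]
      exact ENNReal.rpow_le_rpow h.le (by positivity)
    rw [show (1 / m : ℝ) * m = 1 by field_simp, ENNReal.rpow_one] at h1
    have hcm : c ^ (m : ℝ) ≠ ⊤ := ENNReal.rpow_ne_top_of_nonneg (by positivity) hct
    have h2 := (ENNReal.toReal_le_toReal ENNReal.coe_ne_top hcm).mpr h1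
    calc ‖S ^ m‖ = (‖S ^ m‖₊ : ENNReal).toReal := by simp
      _ ≤ (c ^ (m : ℝ)).toReal := h2
      _ = r ^ m := by rw [← ENNReal.toReal_rpow, Real.rpow_natCast]
  have hS_tendsto : Tendsto (fun m : ℕ => S ^ m) atTop (nhds 0) :=
    squeeze_zero_norm' key (tendsto_pow_atTop_nhds_zero_of_lt_one hr0 hr1)
  have hfinal : Tendsto (fun m : ℕ => Tlim ^ m - Q) atTop (nhds 0) := by
    refine hS_tendsto.congr' ?_
    filter_upwards [eventually_ge_atTop 1] with m hm
    obtain ⟨m', rfl⟩ := Nat.exists_eq_add_of_le hm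
    rw [add_comm]
    exact hpow m'
  exact tendsto_sub_nhds_zero_iff.mp hfinal

/-- Parametric-free Poincaré–Perron step: if invertible matrices `T_n` converge to `T`,
which has a simple eigenvalue `1` of strictly maximal modulus with right eigenvector `u`
and left eigenvector `v`, `uᵗ v = 1`, then for every `ε > 0` there are `m, N` with
`‖T_{n+m} ⋯ T_{n+1} - u vᵗ‖ < ε` for all `n ≥ N`. -/
theorem stmt15 (k : ℕ) (T : ℕ → Matrix (Fin k) (Fin k) ℂ)
    (hinv : ∀ n, IsUnit (T n)) (Tlim : Matrix (Fin k) (Fin k) ℂ)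
    (hconv : Tendsto T atTop (nhds Tlim))
    (hroot : (Matrix.charpoly Tlim).rootMultiplicity 1 = 1)
    (hmax : ∀ μ ∈ (Matrix.charpoly Tlim).roots, μ ≠ 1 → ‖μ‖ < 1)
    (u v : Fin k → ℂ)
    (hu : Tlim.mulVec u = u) (hv : Tlimᵀ.mulVec v = v) (huv : u ⬝ᵥ v = 1)
    (P : ℕ → ℕ → Matrix (Fin k) (Fin k) ℂ)
    (hP0 : ∀ n, P n 0 = 1)
    (hPs : ∀ n m, P n (m + 1) = T (n + m + 1) * P n m) :
    ∀ ε : ℝ, 0 < ε → ∃ m N : ℕ, ∀ n ≥ N, ‖P n m - vecMulVec u v‖ < ε := by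
  intro ε hε
  have hPm : ∀ m : ℕ, Tendsto (fun n => P n m) atTop (nhds (Tlim ^ m)) := by
    intro m
    induction m with
    | zero => simpa [hP0] using (tendsto_const_nhds :
        Tendsto (fun _ : ℕ => (1 : Matrix (Fin k) (Fin k) ℂ)) atTop _)
    | succ m ih =>
        have h1 : Tendsto (fun n => T (n + m + 1)) atTop (nhds Tlim) :=
          hconv.comp (tendsto_add_atTop_nat (m + 1))
        have h2 := h1.mul ih
        rw [← pow_succ'] at h2
        exact h2.congr fun n => (hPs n m).symm
  have hpow := aux_pow_tendsto Tlim hroot hmax u v hu hv huv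
  replace hpow := Metric.tendsto_atTop.mp hpow
  obtain ⟨M₀, hM₀⟩ := hpow (ε / 2) (by linarith)
  have h1 : ‖Tlim ^ M₀ - vecMulVec u v‖ < ε / 2 := by
    have := hM₀ M₀ le_rfl
    rwa [dist_eq_norm] at this
  have hPM := hPm M₀
  replace hPM := Metric.tendsto_atTop.mp hPM
  obtain ⟨N, hN⟩ := hPM (ε / 2) (by linarith)
  refine ⟨M₀, N, fun n hn => ?_⟩
  have h2 := hN n hn
  rw [dist_eq_norm] at h2
  calc ‖P n M₀ - vecMulVec u v‖
      ≤ ‖P n M₀ - Tlim ^ M₀‖ + ‖Tlim ^ M₀ - vecMulVec u v‖ := by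
        simpa [dist_eq_norm] using dist_triangle (P n M₀) (Tlim ^ M₀) (vecMulVec u v)
    _ < ε / 2 + ε / 2 := add_lt_add h2 h1
    _ = ε := by ring
end
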